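/- There is a unique model C of the theory T (up to isomorphism) whose domain consists exactly of the interpretations of the constants in C; moreover, C embeds into every model of T. -/

import Mathlib

open FirstOrder Language

def L0 : FirstOrder.Language where
  Functions := fun _ => Empty
  Relations := fun n => match n with
    | 1 => ℕ
    | 2 => ℕ
    | _ => Empty

def pRel (i : ℕ) : L0.Relations 1 := i

def ltRel (i : ℕ) : L0.Relations 2 := i

def L0Str {M : Type*} (P : ℕ → M → Prop) (lt : ℕ → M → M → Prop) : L0.Structure M where
  funMap := fun {n} f _ => Empty.elim f
  RelMap := fun {n} => match n with
    | 0 => fun r _ => Empty.elim r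
    | 1 => fun i v => P i (v 0)
    | 2 => fun i v => lt i (v 0) (v 1)
    | (_ + 3) => fun r _ => Empty.elim r

/-- `x` satisfies the predicate `Pᵢ`. -/
def pOn {M : Type*} [L0.Structure M] (i : ℕ) (x : M) : Prop :=
  Structure.RelMap (pRel i) ![x]

/-- `x <ᵢ y`. -/
def ltOn {M : Type*} [L0.Structure M] (i : ℕ) (x y : M) : Prop :=
  Structure.RelMap (ltRel i) ![x, y]

/-- The formula `Pᵢ t`. -/
def pFml {n : ℕ} (i : ℕ) (t : L0.Term (Empty ⊕ Fin n)) : L0.BoundedFormula Empty n :=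
  (pRel i).boundedFormula₁ t

/-- The formula `t₁ <ᵢ t₂`. -/
def ltFml {n : ℕ} (i : ℕ) (t₁ t₂ : L0.Term (Empty ⊕ Fin n)) : L0.BoundedFormula Empty n :=
  (ltRel i).boundedFormula₂ t₁ t₂

/-- `Pᵢ` and `Pⱼ` are disjoint. -/
def axDisj (i j : ℕ) : L0.Sentence := ∀' ((pFml i &0 ⊓ pFml j &0).not)

/-- `<ᵢ ⊆ Pᵢ × Pᵢ₊₁`. -/
def axDom (i : ℕ) : L0.Sentence := ∀' ∀' ((ltFml i &0 &1).imp (pFml i &0 ⊓ pFml (i + 1) &1))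

/-- Existence of predecessors. -/
def axEx (i : ℕ) : L0.Sentence := ∀' ((pFml (i + 1) &0).imp (∃' (pFml i &1 ⊓ ltFml i &1 &0)))

/-- Uniqueness of predecessors. -/
def axUniq (i : ℕ) : L0.Sentence :=
  ∀' ∀' ∀' (((ltFml i &0 &2) ⊓ (ltFml i &1 &2)).imp (Term.bdEqual &0 &1))

/-- The base theory `T₀` of leveled forests. -/
def T0 : L0.Theory :=
  {φ | (∃ i j, i ≠ j ∧ φ = axDisj i j) ∨ (∃ i, φ = axDom i) ∨
    (∃ i, φ = axEx i) ∨ (∃ i, φ = axUniq i)}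

/-- A bundled finite model of `T₀`. -/
structure FinT0Model where
  carrier : Type
  [str : L0.Structure carrier]
  fin : Finite carrier
  models : carrier ⊨ T0

attribute [instance] FinT0Model.str

variable (Ms : ℕ → FinT0Model)

/-- The constants of the theory `T`: for each `i, j ∈ ω`, the block `Cᵢʲ` consists of one constant
for each element of the finite model `Mᵢ`. -/
def ConstT : Type := (i : ℕ) × ℕ × (Ms i).carrier

/-- A model of the theory `T`: an `L₀`-structure together with an interpretation of the constants
`Cᵢʲ`, such that `T₀` holds, the constants are pairwise distinct, each block `Cᵢʲ` is an
`L₀`-substructure isomorphic to `Mᵢ` (via the tautological indexing), and each block is closed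
under every relation `<ₖ` in both directions. -/
structure TModel where
  carrier : Type
  [str : L0.Structure carrier]
  interp : ConstT Ms → carrier
  models0 : carrier ⊨ T0
  interp_inj : Function.Injective interp
  interp_P : ∀ (c : ConstT Ms) (n : ℕ), pOn n (interp c) ↔ pOn n c.2.2
  interp_lt : ∀ (i j : ℕ) (a b : (Ms i).carrier) (n : ℕ),
    ltOn n (interp ⟨i, j, a⟩) (interp ⟨i, j, b⟩) ↔ ltOn n a b
  closed : ∀ (i j : ℕ) (a : (Ms i).carrier) (n : ℕ) (y : carrier),
    ltOn n (interp ⟨i, j, a⟩) y ∨ ltOn n y (interp ⟨i, j, a⟩) →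
      ∃ b : (Ms i).carrier, y = interp ⟨i, j, b⟩

attribute [instance] TModel.str

/-- The interpretation of the language `L₀ ∪ C` (i.e. `L₀` with the constants added) on a model
of `T`. -/
noncomputable def TModel.cStr (M : TModel Ms) : (L0[[ConstT Ms]]).Structure M.carrier :=
  @Language.sumStructure L0 (constantsOn (ConstT Ms)) M.carrier M.str
    (constantsOn.structure M.interp)

/-- The enumeration `Ms` lists all finite models of `T₀` up to isomorphism. -/
def ListsAllFinModels : Prop :=
  ∀ N : FinT0Model, ∃ i, Nonempty (N.carrier ≃[L0] (Ms i).carrier)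


section Aux

variable {M : Type*} [L0.Structure M]

lemma realize_axDisj (i j : ℕ) : M ⊨ axDisj i j ↔ ∀ x : M, ¬(pOn i x ∧ pOn j x) := by
  simp [axDisj, pFml, pOn, Sentence.Realize, Formula.Realize, Fin.snoc]

lemma realize_axDom (i : ℕ) : M ⊨ axDom i ↔ ∀ x y : M, ltOn i x y → pOn i x ∧ pOn (i+1) y := by
  simp [axDom, pFml, ltFml, pOn, ltOn, Sentence.Realize, Formula.Realize, Fin.snoc]

lemma realize_axEx (i : ℕ) : M ⊨ axEx i ↔ ∀ x : M, pOn (i+1) x → ∃ y, pOn i y ∧ ltOn i y x := by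
  simp [axEx, pFml, ltFml, pOn, ltOn, Sentence.Realize, Formula.Realize, Fin.snoc]

lemma realize_axUniq (i : ℕ) : M ⊨ axUniq i ↔ ∀ x y z : M, ltOn i x z → ltOn i y z → x = y := by
  simp [axUniq, pFml, ltFml, pOn, ltOn, Sentence.Realize, Formula.Realize, Fin.snoc]

lemma models_T0_iff :
    M ⊨ T0 ↔ ((∀ i j, i ≠ j → ∀ x : M, ¬(pOn i x ∧ pOn j x)) ∧
      (∀ i, ∀ x y : M, ltOn i x y → pOn i x ∧ pOn (i+1) y) ∧
      (∀ i, ∀ x : M, pOn (i+1) x → ∃ y, pOn i y ∧ ltOn i y x) ∧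
      (∀ i, ∀ x y z : M, ltOn i x z → ltOn i y z → x = y)) := by
  rw [Theory.model_iff]
  constructor
  · intro h
    refine ⟨fun i j hij => (realize_axDisj i j).1 (h _ (Or.inl ⟨i, j, hij, rfl⟩)),
      fun i => (realize_axDom i).1 (h _ (Or.inr (Or.inl ⟨i, rfl⟩))),
      fun i => (realize_axEx i).1 (h _ (Or.inr (Or.inr (Or.inl ⟨i, rfl⟩)))),
      fun i => (realize_axUniq i).1 (h _ (Or.inr (Or.inr (Or.inr ⟨i, rfl⟩))))⟩
  · rintro ⟨h1, h2, h3, h4⟩ φ (⟨i, j, hij, rfl⟩ | ⟨i, rfl⟩ | ⟨i, rfl⟩ | ⟨i, rfl⟩)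
    · exact (realize_axDisj i j).2 (h1 i j hij)
    · exact (realize_axDom i).2 (h2 i)
    · exact (realize_axEx i).2 (h3 i)
    · exact (realize_axUniq i).2 (h4 i)

lemma relMap_one (r : L0.Relations 1) (v : Fin 1 → M) :
    Structure.RelMap r v ↔ pOn r (v 0) := by
  have hv : v = ![v 0] := by funext k; fin_cases k; rfl
  rw [hv]; rfl

lemma relMap_two (r : L0.Relations 2) (v : Fin 2 → M) :
    Structure.RelMap r v ↔ ltOn r (v 0) (v 1) := by
  have hv : v = ![v 0, v 1] := by funext k; fin_cases k <;> rfl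
  rw [hv]; rfl

end Aux

lemma constT_inj {Ms : ℕ → FinT0Model} {i j : ℕ} {a b : (Ms i).carrier}
    (h : (⟨i, j, a⟩ : ConstT Ms) = ⟨i, j, b⟩) : a = b :=
  (Prod.mk_inj.1 (eq_of_heq (Sigma.mk.inj_iff.1 h).2)).2

/-- The `Pᵢ`-predicate on the canonical constant model. -/
def CP (n : ℕ) (x : ConstT Ms) : Prop := pOn n x.2.2

/-- The `<ᵢ`-relation on the canonical constant model. -/
def Clt (n : ℕ) (x y : ConstT Ms) : Prop :=
  ∃ b : (Ms x.1).carrier, y = ⟨x.1, x.2.1, b⟩ ∧ ltOn n x.2.2 b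

/-- The `L₀`-structure on the canonical constant model. -/
def CStr : L0.Structure (ConstT Ms) := L0Str (CP Ms) (Clt Ms)

lemma C_pOn (n : ℕ) (x : ConstT Ms) : @pOn _ (CStr Ms) n x ↔ pOn n x.2.2 := Iff.rfl

lemma C_ltOn (n : ℕ) (x y : ConstT Ms) : @ltOn _ (CStr Ms) n x y ↔ Clt Ms n x y := Iff.rfl

lemma C_models0 : @Theory.Model L0 (ConstT Ms) (CStr Ms) T0 := by
  letI := CStr Ms
  have hM : ∀ i, ((∀ k l, k ≠ l → ∀ x : (Ms i).carrier, ¬(pOn k x ∧ pOn l x)) ∧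
      (∀ k, ∀ x y : (Ms i).carrier, ltOn k x y → pOn k x ∧ pOn (k+1) y) ∧
      (∀ k, ∀ x : (Ms i).carrier, pOn (k+1) x → ∃ y, pOn k y ∧ ltOn k y x) ∧
      (∀ k, ∀ x y z : (Ms i).carrier, ltOn k x z → ltOn k y z → x = y)) :=
    fun i => models_T0_iff.1 (Ms i).models
  rw [models_T0_iff]
  refine ⟨?_, ?_, ?_, ?_⟩
  · rintro k l hkl ⟨i, j, a⟩ ⟨h1, h2⟩
    exact (hM i).1 k l hkl a ⟨h1, h2⟩
  · rintro k ⟨i, j, a⟩ y h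
    obtain ⟨b, rfl, hab⟩ : Clt Ms k ⟨i, j, a⟩ y := h
    exact (hM i).2.1 k a b hab
  · rintro k ⟨i, j, a⟩ ha
    obtain ⟨b, hb, hba⟩ := (hM i).2.2.1 k a ha
    exact ⟨⟨i, j, b⟩, hb, a, rfl, hba⟩
  · rintro k ⟨i, j, a⟩ ⟨i', j', a'⟩ z hx hy
    obtain ⟨c, rfl, hac⟩ : Clt Ms k ⟨i, j, a⟩ z := hx
    obtain ⟨c', h, hac'⟩ : Clt Ms k ⟨i', j', a'⟩ ⟨i, j, c⟩ := hy
    obtain ⟨rfl, heq⟩ := Sigma.mk.inj_iff.1 h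
    obtain ⟨rfl, rfl⟩ := Prod.mk_inj.1 (eq_of_heq heq)
    rw [(hM i).2.2.2 k a a' c hac hac']

/-- The canonical constant model. -/
def CModel : TModel Ms where
  carrier := ConstT Ms
  str := CStr Ms
  interp := id
  models0 := C_models0 Ms
  interp_inj := fun _ _ h => h
  interp_P := fun _ _ => Iff.rfl
  interp_lt := by
    intro i j a b n
    constructor
    · intro h
      obtain ⟨b', h, hab⟩ : Clt Ms n ⟨i, j, a⟩ ⟨i, j, b⟩ := h
      obtain rfl := constT_inj h
      exact hab
    · intro h
      exact show Clt Ms n ⟨i, j, a⟩ ⟨i, j, b⟩ from ⟨b, rfl, h⟩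
  closed := by
    rintro i j a n y (h | h)
    · obtain ⟨b, rfl, hab⟩ : Clt Ms n ⟨i, j, a⟩ y := h
      exact ⟨b, rfl⟩
    · obtain ⟨i', j', a'⟩ := y
      obtain ⟨b', h, hab⟩ : Clt Ms n ⟨i', j', a'⟩ ⟨i, j, a⟩ := h
      obtain ⟨rfl, heq⟩ := Sigma.mk.inj_iff.1 h
      obtain ⟨rfl, -⟩ := Prod.mk_inj.1 (eq_of_heq heq)
      exact ⟨a', rfl⟩

lemma interp_ltOn_iff (M : TModel Ms) (n : ℕ) (c d : ConstT Ms) :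
    ltOn n (M.interp c) (M.interp d) ↔ Clt Ms n c d := by
  obtain ⟨i, j, a⟩ := c
  constructor
  · intro h
    obtain ⟨b, hb⟩ := M.closed i j a n (M.interp d) (Or.inl h)
    have hd : d = ⟨i, j, b⟩ := M.interp_inj hb
    subst hd
    exact ⟨b, rfl, (M.interp_lt i j a b n).1 h⟩
  · rintro ⟨b, rfl, hab⟩
    exact (M.interp_lt i j a b n).2 hab

/-- The canonical interpretation map respects all relations (as an iff). -/
lemma interp_rel_iff (M : TModel Ms) {n : ℕ} (r : L0.Relations n) (x : Fin n → ConstT Ms) :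
    Structure.RelMap r (M.interp ∘ x) ↔ @Structure.RelMap _ _ (CStr Ms) _ r x := by
  match n, r with
  | 0, r => exact Empty.elim r
  | 1, r =>
    rw [relMap_one r, @relMap_one _ (CStr Ms) r]
    exact (M.interp_P (x 0) r).trans (C_pOn Ms r (x 0)).symm
  | 2, r =>
    rw [relMap_two r, @relMap_two _ (CStr Ms) r]
    exact (interp_ltOn_iff Ms M r (x 0) (x 1)).trans (C_ltOn Ms r (x 0) (x 1)).symm
  | (m + 3), r => exact Empty.elim r

/-- there is a model `C` of `T`, unique up to isomorphism, whose domain consists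
exactly of the interpretations of the constants; moreover `C` embeds into every model of `T`
(as an `L₀ ∪ C`-structure, i.e. by an `L₀`-embedding respecting the constants). -/
theorem exists_unique_constant_model (Ms : ℕ → FinT0Model) (hMs : ListsAllFinModels Ms) :
    ∃ C : TModel Ms, Function.Surjective C.interp ∧
      (∀ D : TModel Ms, Function.Surjective D.interp →
        ∃ e : C.carrier ≃[L0] D.carrier, ∀ c, e (C.interp c) = D.interp c) ∧
      (∀ M : TModel Ms,
        ∃ g : C.carrier ↪[L0] M.carrier, ∀ c, g (C.interp c) = M.interp c) := by
  classical
  refine ⟨CModel Ms, Function.surjective_id, ?_, ?_⟩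
  · intro D hsurj
    refine ⟨{ toEquiv := Equiv.ofBijective D.interp ⟨D.interp_inj, hsurj⟩,
              map_fun' := fun {n} f _ => Empty.elim f,
              map_rel' := fun {n} r x => interp_rel_iff Ms D r x }, fun c => rfl⟩
  · intro M
    refine ⟨{ toFun := M.interp,
              inj' := M.interp_inj,
              map_fun' := fun {n} f _ => Empty.elim f,
              map_rel' := fun {n} r x => interp_rel_iff Ms M r x }, fun c => rfl⟩
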